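/- Let S, I, R, B : [0,∞) → ℝ be a solution of the SIRB system S' = −βSI, I' = βSI − γI + βσαIR, R' = γI − βσIR, B' = βσ(1−α)IR with β>0, γ>0, σ>0, 0<α<1, initial conditions S(0)>0, I(0)>0, R(0)≥0 with (σβ/γ)·R(0) < 1, B(0)≥0, S(0)+I(0)+R(0)+B(0)=1, and suppose S(t)>0 and I(t)>0 for all t≥0. Then for every t ≥ 0: I(t) = I(0) + (S(0) − S(t)) + (γ/β)·ln(S(t)/S(0)) − α·[(γ/(σβ))·ln((1 − (σβ/γ)R(t))/(1 − (σβ/γ)R(0))) + (R(t) − R(0))]. -/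

import Mathlib

open Set MeasureTheory intervalIntegral Topology Filter

/-- Explicit solution for `I`:
`I t = I 0 + (S 0 − S t) + (γ/β) ln(S t / S 0)
      − α [(γ/(σβ)) ln((1 − (σβ/γ)R t)/(1 − (σβ/γ)R 0)) + (R t − R 0)]`. -/
theorem sirb_explicit_I (β γ σ α : ℝ) (S I R B : ℝ → ℝ)
    (hβ : 0 < β) (hγ : 0 < γ) (hσ : 0 < σ) (hα0 : 0 < α) (hα1 : α < 1)
    (hS' : ∀ t : ℝ, 0 ≤ t → HasDerivAt S (-(β * S t * I t)) t)
    (hI' : ∀ t : ℝ, 0 ≤ t → HasDerivAt I (β * S t * I t - γ * I t + β * σ * α * I t * R t) t)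
    (hR' : ∀ t : ℝ, 0 ≤ t → HasDerivAt R (γ * I t - β * σ * I t * R t) t)
    (hB' : ∀ t : ℝ, 0 ≤ t → HasDerivAt B (β * σ * (1 - α) * I t * R t) t)
    (hS0 : 0 < S 0) (hI0 : 0 < I 0) (hR0 : 0 ≤ R 0) (hB0 : 0 ≤ B 0)
    (hsum : S 0 + I 0 + R 0 + B 0 = 1)
    (hSpos : ∀ t : ℝ, 0 ≤ t → 0 < S t) (hIpos : ∀ t : ℝ, 0 ≤ t → 0 < I t)
    (hR0lt1 : σ * β / γ * R 0 < 1) :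
    ∀ t : ℝ, 0 ≤ t →
      I t = I 0 + (S 0 - S t) + γ / β * Real.log (S t / S 0)
        - α * (γ / (σ * β) * Real.log ((1 - σ * β / γ * R t) / (1 - σ * β / γ * R 0))
          + (R t - R 0)) := by
  set u : ℝ → ℝ := fun t => 1 - σ * β / γ * R t with hu_def
  have hγ0 : (γ : ℝ) ≠ 0 := ne_of_gt hγ
  have hβ0 : (β : ℝ) ≠ 0 := ne_of_gt hβ
  have hσ0 : (σ : ℝ) ≠ 0 := ne_of_gt hσ
  have hu' : ∀ t : ℝ, 0 ≤ t → HasDerivAt u (-(σ * β * I t * u t)) t := by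
    intro t ht
    have h := ((hR' t ht).const_mul (σ * β / γ)).const_sub 1
    have heq : -(σ * β / γ * (γ * I t - β * σ * I t * R t)) = -(σ * β * I t * u t) := by
      simp only [hu_def]
      field_simp
    rw [heq] at h
    exact h
  -- continuity of I on Ici 0
  have hIcont : ContinuousOn I (Ici 0) := fun t ht =>
    (hI' t ht).continuousAt.continuousWithinAt
  have hIIcont : ∀ t : ℝ, 0 ≤ t → ContinuousOn (fun s => σ * β * I s) (Icc 0 t) :=
    fun t ht => (continuousOn_const.mul (hIcont.mono Icc_subset_Ici_self))
  -- primitive J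
  set J : ℝ → ℝ := fun t => ∫ s in (0:ℝ)..t, σ * β * I s with hJ_def
  have hJint : ∀ t : ℝ, 0 ≤ t → IntervalIntegrable (fun s => σ * β * I s) volume 0 t := by
    intro t ht
    exact ((hIIcont t ht).mono (by rw [uIcc_of_le ht])).intervalIntegrable
  have hJ' : ∀ x : ℝ, 0 ≤ x → HasDerivWithinAt J (σ * β * I x) (Ici x) x := by
    intro x hx
    have hcIci : ContinuousOn (fun s => σ * β * I s) (Ici x) :=
      continuousOn_const.mul (hIcont.mono (Ici_subset_Ici.2 hx))
    have hm : StronglyMeasurableAtFilter (fun s => σ * β * I s) (𝓝[Ioi x] x) volume :=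
      ⟨Ici x, mem_of_superset self_mem_nhdsWithin Ioi_subset_Ici_self,
        hcIci.aestronglyMeasurable measurableSet_Ici⟩
    have hc : ContinuousWithinAt (fun s => σ * β * I s) (Ioi x) x :=
      (hcIci x self_mem_Ici).mono Ioi_subset_Ici_self
    exact integral_hasDerivWithinAt_right (hJint x hx) hm hc
  have hJcont : ∀ T : ℝ, 0 ≤ T → ContinuousOn J (Icc 0 T) := by
    intro T hT
    have := intervalIntegral.continuousOn_primitive_interval
      (μ := volume) (f := fun s => σ * β * I s) (a := 0) (b := T)
      (((hIIcont T hT).mono (by rw [uIcc_of_le hT])).integrableOn_compact isCompact_uIcc)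
    exact this.mono (by rw [uIcc_of_le hT])
  -- u t = u 0 * exp (- J t), hence positive
  have hupos : ∀ t : ℝ, 0 ≤ t → 0 < u t := by
    intro T hT
    have hu0 : 0 < u 0 := by simpa [hu_def] using hR0lt1
    set g : ℝ → ℝ := fun t => u t * Real.exp (J t) with hg_def
    have hgcont : ContinuousOn g (Icc 0 T) := by
      apply ContinuousOn.mul
      · exact fun s hs => (hu' s hs.1).continuousAt.continuousWithinAt
      · exact Real.continuous_exp.comp_continuousOn (hJcont T hT)
    have hgderiv : ∀ x ∈ Ico (0:ℝ) T, HasDerivWithinAt g 0 (Ici x) x := by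
      intro x hx
      have h1 : HasDerivWithinAt (fun y => u y * Real.exp (J y))
          (-(σ * β * I x * u x) * Real.exp (J x) + u x * (Real.exp (J x) * (σ * β * I x))) (Ici x) x :=
        ((hu' x hx.1).hasDerivWithinAt (s := Ici x)).fun_mul ((hJ' x hx.1).exp)
      convert h1 using 1
      ring
    have := constant_of_has_deriv_right_zero hgcont hgderiv T ⟨hT, le_refl T⟩
    have hJ0 : J 0 = 0 := by simp [hJ_def]
    have hgT : u T * Real.exp (J T) = u 0 := by
      simpa [hg_def, hJ0] using this
    have : u T = u 0 * Real.exp (-(J T)) := by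
      rw [← hgT]
      rw [Real.exp_neg]
      field_simp
    rw [this]
    positivity
  -- main conserved quantity
  intro T hT
  set F : ℝ → ℝ := fun t => I t + S t - γ / β * Real.log (S t)
      + α * (γ / (σ * β) * Real.log (u t) + R t) with hF_def
  have hFcont : ContinuousOn F (Icc 0 T) := by
    have hScont : ContinuousOn S (Icc 0 T) := fun s hs =>
      (hS' s hs.1).continuousAt.continuousWithinAt
    have hRcont : ContinuousOn R (Icc 0 T) := fun s hs =>
      (hR' s hs.1).continuousAt.continuousWithinAt
    have hucont : ContinuousOn u (Icc 0 T) := fun s hs =>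
      (hu' s hs.1).continuousAt.continuousWithinAt
    have hlogS : ContinuousOn (fun t => Real.log (S t)) (Icc 0 T) :=
      Real.continuousOn_log.comp hScont (fun s hs => ne_of_gt (hSpos s hs.1))
    have hlogu : ContinuousOn (fun t => Real.log (u t)) (Icc 0 T) :=
      Real.continuousOn_log.comp hucont (fun s hs => ne_of_gt (hupos s hs.1))
    exact (((hIcont.mono Icc_subset_Ici_self).add hScont).sub
        (continuousOn_const.mul hlogS)).add
        (continuousOn_const.mul ((continuousOn_const.mul hlogu).add hRcont))
  have hFderiv : ∀ x ∈ Ico (0:ℝ) T, HasDerivWithinAt F 0 (Ici x) x := by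
    intro x hx
    have hx0 := hx.1
    have hlogS : HasDerivAt (fun t => Real.log (S t))
        (-(β * S x * I x) / S x) x := (hS' x hx0).log (ne_of_gt (hSpos x hx0))
    have hlogu : HasDerivAt (fun t => Real.log (u t))
        (-(σ * β * I x * u x) / u x) x := (hu' x hx0).log (ne_of_gt (hupos x hx0))
    have h := (((hI' x hx0).add (hS' x hx0)).sub (hlogS.const_mul (γ / β))).add
      (((hlogu.const_mul (γ / (σ * β))).add (hR' x hx0)).const_mul α)
    have hSx := ne_of_gt (hSpos x hx0)
    have hux := ne_of_gt (hupos x hx0)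
    have e1 : -(β * S x * I x) / S x = -(β * I x) := by
      rw [div_eq_iff hSx]; ring
    have e2 : -(σ * β * I x * u x) / u x = -(σ * β * I x) := by
      rw [div_eq_iff hux]; ring
    rw [e1, e2] at h
    have heq : β * S x * I x - γ * I x + β * σ * α * I x * R x + -(β * S x * I x)
        - γ / β * -(β * I x)
        + α * (γ / (σ * β) * -(σ * β * I x) + (γ * I x - β * σ * I x * R x))
        = 0 := by
      field_simp
      ring
    rw [heq] at h
    exact h.hasDerivWithinAt
  have hconst := constant_of_has_deriv_right_zero hFcont hFderiv T ⟨hT, le_refl T⟩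
  -- unfold and rearrange
  have hST := hSpos T hT
  have huT := hupos T hT
  have hu0 : 0 < u 0 := by simpa [hu_def] using hR0lt1
  have hlogSdiv : Real.log (S T / S 0) = Real.log (S T) - Real.log (S 0) :=
    Real.log_div (ne_of_gt hST) (ne_of_gt hS0)
  have hlogudiv : Real.log (u T / u 0) = Real.log (u T) - Real.log (u 0) :=
    Real.log_div (ne_of_gt huT) (ne_of_gt hu0)
  simp only [hF_def] at hconst
  rw [show (1 - σ * β / γ * R T) = u T from rfl, show (1 - σ * β / γ * R 0) = u 0 from rfl,
    hlogudiv, hlogSdiv]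
  linarith [hconst]
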